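/- In the Setting, for every integer n ≥ 0 one has the equality of ideals of B_{n+1}: φ̃_{n+1}((L ⊗_R τ_n(X/V, φ I, 𝔞^λ))^{1/q}) + (𝔞^{⌈λ/q⌉} I) B_{n+1} = τ_{n+1}(X/V, φ I, 𝔞^{λ/q}). -/

import Mathlib

/-!
This file formalizes a statement about the limiting relative test ideals of
Sato–Takagi, "General hyperplane sections of log canonical threefolds /
Deformations of F-pure and F-regular singularities" (Appendix A).

Throughout, for a (commutative) ring `C` of characteristic `p > 0` and `q = p^e`,
the ring `C^{1/q^n}` of `q^n`-th roots is *modelled* by a copy of `C`, the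
identification being the isomorphism `ψ_n : C^{1/q^n} ≃ C`, `x ↦ x^{q^n}`.
Under this identification:
* the inclusion `C ⊆ C^{1/q^n}` becomes `x ↦ x^{q^n}`,
* the inclusion `C^{1/q^i} ⊆ C^{1/q^n}` (`i ≤ n`) becomes `x ↦ x^{q^{n-i}}`,
* for a `C`-module `M`, the `C^{1/q^n}`-module `M^{1/q^n}` becomes the
  abelian group `M` with appropriately twisted scalar multiplications.
All objects of the Setting (`B_n = R ⊗_A A^{1/q^n}`, `L^{(n)}`, the maps
`φ̃_n`, `φ^n`, the ideals `τ_n(X/V, φ I, 𝔞^λ)`) are realized accordingly below.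
-/

open scoped TensorProduct

noncomputable section

universe u

/-- `A^{1/q^n}`, realized as a copy of `A`; the identification sends `x ∈ A^{1/q^n}`
to its coordinate `x^{q^n} ∈ A`. -/
def ARoot (A : Type u) (p e n : ℕ) : Type u := A

namespace ARoot

variable (A : Type u) [CommRing A] (p e : ℕ) [ExpChar A p]

instance (n : ℕ) : CommRing (ARoot A p e n) := inferInstanceAs (CommRing A)

/-- the inclusion `A ⊆ A^{1/q^n}` (in coordinates, `a ↦ a^{q^n}`). -/
instance (n : ℕ) : Algebra A (ARoot A p e n) :=
  (show A →+* ARoot A p e n from iterateFrobenius A p (e * n)).toAlgebra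

/-- coordinate-wise identity map `A^{1/q^m} → A^{1/q^n}`; for `m ≤ n` this is the
`q^{n-m}`-th root isomorphism `x ↦ x^{1/q^{n-m}}`. -/
def cast {A : Type u} {p e : ℕ} (m n : ℕ) (a : ARoot A p e m) : ARoot A p e n := a

/-- the inclusion `A^{1/q^i} ⊆ A^{1/q^n}` for `i ≤ n` (in coordinates,
`x ↦ x^{q^{n-i}}`). -/
def incl (i n : ℕ) (h : i ≤ n) : ARoot A p e i →ₐ[A] ARoot A p e n :=
  AlgHom.mk (show ARoot A p e i →+* ARoot A p e n from iterateFrobenius A p (e * (n - i)))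
    (fun a => by
      show iterateFrobenius A p (e * (n - i)) (iterateFrobenius A p (e * i) a)
        = iterateFrobenius A p (e * n) a
      rw [iterateFrobenius_def, iterateFrobenius_def, iterateFrobenius_def,
        ← pow_mul, ← pow_add, ← Nat.mul_add, Nat.add_sub_cancel' h])

end ARoot

section B

variable (A : Type u) [CommRing A] (p e : ℕ) [ExpChar A p]
variable (R : Type u) [CommRing R] [Algebra A R] [ExpChar R p]

/-- `B_n := R ⊗_A A^{1/q^n}`. -/
def BRing (n : ℕ) : Type u := R ⊗[A] (ARoot A p e n)

instance (n : ℕ) : CommRing (BRing A p e R n) :=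
  inferInstanceAs (CommRing (R ⊗[A] ARoot A p e n))

instance (n : ℕ) : Algebra A (BRing A p e R n) :=
  inferInstanceAs (Algebra A (R ⊗[A] ARoot A p e n))

instance (n : ℕ) : Algebra R (BRing A p e R n) :=
  inferInstanceAs (Algebra R (R ⊗[A] ARoot A p e n))

/-- the natural map `a_{i,n} : B_i → B_n` (`i ≤ n`) induced by
`A^{1/q^i} ⊆ A^{1/q^n}`. -/
def aMap (i n : ℕ) (h : i ≤ n) : BRing A p e R i →ₐ[A] BRing A p e R n :=
  Algebra.TensorProduct.map (AlgHom.id A R) (ARoot.incl A p e i n h)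

/-- A copy of `R` with the `A`-algebra structure `a ↦ (algebraMap A R a)^{q^n}`;
an auxiliary device used to define `Θ_n : B_n → R` below. -/
def Rtw (A : Type u) (p e : ℕ) (R : Type u) (n : ℕ) : Type u := R

instance (n : ℕ) : CommRing (Rtw A p e R n) := inferInstanceAs (CommRing R)

instance (n : ℕ) : Algebra A (Rtw A p e R n) :=
  ((show R →+* Rtw A p e R n from iterateFrobenius R p (e * n)).comp (algebraMap A R)).toAlgebra

/-- `Θ_n : B_n = R ⊗_A A^{1/q^n} →+* R` is the ring homomorphism corresponding, under
the identifications above, to the inclusion `B_n ⊆ R^{1/q^n}` followed by the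
isomorphism `R^{1/q^n} ≅ R`, `x ↦ x^{q^n}`; concretely, on coordinates,
`Θ_n (r ⊗ a) = r^{q^n} · g(a)` where `g : A → R` is the structure map.
Restriction of scalars along `Θ_n` equips the underlying group `M` of an
`R`-module with its `B_n`-module structure of `M^{1/q^n}`. -/
def theta (n : ℕ) : BRing A p e R n →+* R :=
  show BRing A p e R n →+* Rtw A p e R n from
  (Algebra.TensorProduct.productMap
    (AlgHom.mk (show R →+* Rtw A p e R n from iterateFrobenius R p (e * n)) (fun a => by
      show iterateFrobenius R p (e * n) (algebraMap A R a) = algebraMap A (Rtw A p e R n) a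
      rw [RingHom.algebraMap_toAlgebra]; rfl))
    (AlgHom.mk (show ARoot A p e n →+* Rtw A p e R n from algebraMap A R) (fun a => by
      show algebraMap A R (iterateFrobenius A p (e * n) a)
          = iterateFrobenius R p (e * n) (algebraMap A R a)
      rw [iterateFrobenius_def, iterateFrobenius_def, map_pow]))).toRingHom

/-- `M^{1/q^n}` for an `R`-module `M`: the abelian group `M` viewed as a module
over `B_n` via `Θ_n`. -/
def RootMod (A : Type u) (p e : ℕ) (R : Type u) (n : ℕ) (M : Type u) : Type u := M

instance (n : ℕ) (M : Type u) [AddCommGroup M] : AddCommGroup (RootMod A p e R n M) :=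
  inferInstanceAs (AddCommGroup M)

instance (n : ℕ) (M : Type u) [AddCommGroup M] [Module R M] :
    Module (BRing A p e R n) (RootMod A p e R n M) :=
  Module.compHom M (theta A p e R n)

/-- the tautological map `M → M^{1/q^n}`, `x ↦ x^{1/q^n}`. -/
def RootMod.of (n : ℕ) {M : Type u} (x : M) : RootMod A p e R n M := x

variable (L : Type u) [AddCommGroup L] [Module R L]

/-- `L^{(n)} := L^{⊗ (q^n - 1)/(q - 1)}`, realized recursively via
`L^{(0)} = R` and `L^{(n+1)} = L^{⊗ q^n} ⊗_R L^{(n)}`. -/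
def LObj (q : ℕ) : ℕ → ModuleCat.{u} R
  | 0 => ModuleCat.of R R
  | (n+1) => ModuleCat.of R (TensorPower R (q ^ n) L ⊗[R] (LObj q n))

/-- The `n`-th limiting relative test ideal
`τ_n(X/V, φ I, 𝔞^λ) := Σ_{i=0}^n φ^i((𝔞^{⌈q^i λ⌉} I L^{(i)})^{1/q^i}) B_n ⊆ B_n`,
expressed in terms of the family `Φ = (φ^i)_i` of the maps
`φ^i : (L^{(i)})^{1/q^i} → B_i`. -/
def tauRel
    (Φ : (n : ℕ) → (RootMod A p e R n (LObj R L (p ^ e) n)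
      →ₗ[BRing A p e R n] BRing A p e R n))
    (I 𝔞 : Ideal R) (lam : ℝ) (n : ℕ) : Ideal (BRing A p e R n) :=
  ⨆ i : Fin (n + 1),
    Ideal.span ((aMap A p e R i n (Nat.lt_succ_iff.mp i.isLt)) ''
      ((fun x : LObj R L (p ^ e) i => Φ i (RootMod.of A p e R i x)) ''
        (((𝔞 ^ ⌈((p : ℝ) ^ e) ^ (i : ℕ) * lam⌉₊ * I) •
            (⊤ : Submodule R (LObj R L (p ^ e) i)) :
              Submodule R (LObj R L (p ^ e) i)) :
          Set (LObj R L (p ^ e) i))))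

end B

section Setting

/-! ### The Setting

`A` is a Noetherian integral domain of characteristic `p > 0`, `R` is an integral
domain which is flat and essentially of finite type over `A`, `q = p^e`,
`L` is an invertible `R`-module, `φ : L^{1/q} → B_1 = R ⊗_A A^{1/q}` is a
`B_1`-module homomorphism, `I` and `𝔞` are nonzero ideals of `R` and `lam > 0` is
a real number.

The map `φ̃_{n+1} : (L ⊗_R B_n)^{1/q} → B_{n+1}` is the additive map `Φt n`
(uniquely) characterized by the hypothesis `hΦt`, and the `B_n`-linear map
`φ^n : (L^{(n)})^{1/q^n} → B_n` is the map `Φ n`, (uniquely) characterized by the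
recursion hypotheses `hΦzero`, `hΦsucc`. -/

variable (A : Type u) [CommRing A] [IsDomain A] [IsNoetherianRing A]
variable (p : ℕ) [Fact p.Prime] [CharP A p] (e : ℕ)
variable (R : Type u) [CommRing R] [IsDomain R] [Algebra A R] [CharP R p]
variable [Module.Flat A R] [Algebra.EssFiniteType A R]
variable (L : Type u) [AddCommGroup L] [Module R L]
variable [Module.Finite R L] [Module.Projective R L]
variable (I 𝔞 : Ideal R) (lam : ℝ)
variable (φ : RootMod A p e R 1 L →ₗ[BRing A p e R 1] BRing A p e R 1)
variable (Φt : (n : ℕ) → (L ⊗[R] BRing A p e R n) →+ BRing A p e R (n + 1))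
variable (Φ : (n : ℕ) → (RootMod A p e R n (LObj R L (p ^ e) n)
  →ₗ[BRing A p e R n] BRing A p e R n))


/-! ### Auxiliary general lemmas: invertible modules over a domain -/

section RankOne
variable {R : Type u} [CommRing R] [IsDomain R]
variable {L : Type u} [AddCommGroup L] [Module R L] [Module.Projective R L]

omit [IsDomain R] in
theorem aux_smul_swap' (K : Type u) [Field K] [Algebra R K] [IsFractionRing R K]
    (hL : ∃ L' : ModuleCat.{u} R, Nonempty ((L ⊗[R] L') ≃ₗ[R] R))
    (g : L →ₗ[R] R) (a b : L) : g a • b = g b • a := by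
  obtain ⟨L', ⟨ε⟩⟩ := hL
  have h1 : Function.Injective (LinearMap.rTensor L (Algebra.linearMap R K)) :=
    Module.Flat.rTensor_preserves_injective_linearMap (Algebra.linearMap R K)
      (by exact IsFractionRing.injective R K)
  have hjL : Function.Injective (fun x : L => (1 : K) ⊗ₜ[R] x) := by
    intro x y hxy
    apply (TensorProduct.lid R L).symm.injective
    apply h1
    simpa using hxy
  have hrank : Module.rank K (K ⊗[R] L) = 1 := by
    have e1 : (K ⊗[R] L) ⊗[K] (K ⊗[R] L') ≃ₗ[K] (K ⊗[R] L) ⊗[R] L' :=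
      TensorProduct.AlgebraTensorModule.cancelBaseChange R K K (K ⊗[R] L) L'
    have e2 : (K ⊗[R] L) ⊗[R] L' ≃ₗ[K] K ⊗[R] (L ⊗[R] L') :=
      TensorProduct.AlgebraTensorModule.assoc R R K K L L'
    have e3 : K ⊗[R] (L ⊗[R] L') ≃ₗ[K] K ⊗[R] R := LinearEquiv.baseChange R K _ _ ε
    have e4 : K ⊗[R] R ≃ₗ[K] K := (Algebra.TensorProduct.rid R K K).toLinearEquiv
    have h1 : Module.rank K ((K ⊗[R] L) ⊗[K] (K ⊗[R] L')) = 1 := by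
      rw [(e1.trans (e2.trans (e3.trans e4))).rank_eq, Module.rank_self]
    rw [rank_tensorProduct'] at h1
    have h2 : Module.rank K (K ⊗[R] L) ≤ 1 := by
      calc Module.rank K (K ⊗[R] L) = Module.rank K (K ⊗[R] L) * 1 := (mul_one _).symm
        _ ≤ Module.rank K (K ⊗[R] L) * Module.rank K (K ⊗[R] L') := by
            refine mul_le_mul_right (Cardinal.one_le_iff_ne_zero.mpr ?_) _
            intro h
            rw [h, mul_zero] at h1
            exact zero_ne_one h1
        _ = 1 := h1
    rcases lt_or_eq_of_le h2 with h | h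
    · exfalso
      rw [Cardinal.lt_one_iff_zero] at h
      rw [h, zero_mul] at h1
      exact zero_ne_one h1
    · exact h
  obtain ⟨u₀, -, hu₀⟩ := rank_eq_one_iff.mp hrank
  let h : K ⊗[R] L →ₗ[K] K := LinearMap.liftBaseChange K ((Algebra.linearMap R K) ∘ₗ g)
  have hh : ∀ x : L, h ((1:K) ⊗ₜ[R] x) = algebraMap R K (g x) := by
    intro x; simp [h]
  apply hjL
  obtain ⟨c, hc⟩ := hu₀ ((1:K) ⊗ₜ[R] a)
  obtain ⟨d, hd⟩ := hu₀ ((1:K) ⊗ₜ[R] b)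
  have ha' : algebraMap R K (g a) = c * h u₀ := by
    rw [← hh a, ← hc, map_smul, smul_eq_mul]
  have hb' : algebraMap R K (g b) = d * h u₀ := by
    rw [← hh b, ← hd, map_smul, smul_eq_mul]
  show (1 : K) ⊗ₜ[R] (g a • b) = (1 : K) ⊗ₜ[R] (g b • a)
  rw [TensorProduct.tmul_smul, TensorProduct.tmul_smul,
    ← algebraMap_smul K (g a), ← algebraMap_smul K (g b), ← hc, ← hd,
    ha', hb', smul_smul, smul_smul]
  ring_nf

theorem aux_smul_swap (hL : ∃ L' : ModuleCat.{u} R, Nonempty ((L ⊗[R] L') ≃ₗ[R] R))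
    (g : L →ₗ[R] R) (a b : L) : g a • b = g b • a :=
  aux_smul_swap' (FractionRing R) hL g a b

theorem aux_tprod_mem_diag_span (p : ℕ) [ExpChar R p]
    (hL : ∃ L' : ModuleCat.{u} R, Nonempty ((L ⊗[R] L') ≃ₗ[R] R))
    (m : ℕ) (hm : ∃ s : ℕ, m = p ^ s) (x : Fin m → L) :
    PiTensorProduct.tprod R x ∈ Submodule.span R
      {z : TensorPower R m L |
        ∃ l : L, z = PiTensorProduct.tprod R (fun _ : Fin m => l)} := by
  obtain ⟨s, rfl⟩ := hm
  obtain ⟨L', ⟨ε⟩⟩ := hL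
  obtain ⟨S, hS⟩ := TensorProduct.exists_finset (ε.symm 1)
  set c : L × L' → R := fun k => ε (k.1 ⊗ₜ k.2) with hc
  have hsum : ∑ k ∈ S, c k = 1 := by
    rw [hc]
    rw [← map_sum, ← hS, ε.apply_symm_apply]
  have hsum' : ∑ k ∈ S, (c k) ^ (p ^ s) = 1 := by
    rw [← sum_pow_char_pow, hsum, one_pow]
  have key : ∀ k : L × L', ∃ (r : R) (l : L), (c k) ^ (p ^ s) • (PiTensorProduct.tprod R x)
      = r • (PiTensorProduct.tprod R (fun _ : Fin (p ^ s) => l)) := by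
    intro k
    set g : L →ₗ[R] R := ε.toLinearMap ∘ₗ ((TensorProduct.mk R L L').flip k.2) with hg
    have h1 : (c k) ^ (p ^ s) • (PiTensorProduct.tprod R x)
        = PiTensorProduct.tprod R (fun j => c k • x j) := by
      rw [MultilinearMap.map_smul_univ]
      congr 1
      simp [Finset.prod_const]
    have h2 : (fun j => c k • x j) = fun j => g (x j) • k.1 := by
      funext j
      exact aux_smul_swap ⟨L', ⟨ε⟩⟩ g k.1 (x j)
    refine ⟨∏ j : Fin (p ^ s), g (x j), k.1, ?_⟩
    rw [h1, h2, MultilinearMap.map_smul_univ]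
  have hx : PiTensorProduct.tprod R x
      = ∑ k ∈ S, (c k) ^ (p ^ s) • PiTensorProduct.tprod R x := by
    rw [← Finset.sum_smul, hsum', one_smul]
  rw [hx]
  refine Submodule.sum_mem _ fun k _ => ?_
  obtain ⟨r, l, hk⟩ := key k
  rw [hk]
  exact Submodule.smul_mem _ _ (Submodule.subset_span ⟨l, rfl⟩)

theorem aux_diag_span_eq_top (p : ℕ) [ExpChar R p]
    (hL : ∃ L' : ModuleCat.{u} R, Nonempty ((L ⊗[R] L') ≃ₗ[R] R))
    (m : ℕ) (hm : ∃ s : ℕ, m = p ^ s) :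
    Submodule.span R {z : TensorPower R m L |
        ∃ l : L, z = PiTensorProduct.tprod R (fun _ : Fin m => l)} = ⊤ := by
  rw [eq_top_iff, ← PiTensorProduct.span_tprod_eq_top, Submodule.span_le]
  rintro _ ⟨y, rfl⟩
  exact aux_tprod_mem_diag_span p hL m hm y

end RankOne

/-! ### Auxiliary lemmas in the Setting -/

section AuxSetting

variable (A : Type u) [CommRing A] (p : ℕ) [Fact p.Prime] [CharP A p] (e : ℕ)
variable (R : Type u) [CommRing R] [Algebra A R] [CharP R p]
variable (L : Type u) [AddCommGroup L] [Module R L]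

theorem bInd {n : ℕ} {motive : BRing A p e R n → Prop} (x : BRing A p e R n)
    (zero : motive 0) (tmul : ∀ (r : R) (a : ARoot A p e n), motive (r ⊗ₜ[A] a))
    (add : ∀ x y, motive x → motive y → motive (x + y)) : motive x :=
  TensorProduct.induction_on x zero tmul add

theorem aux_aMap_tmul (i n : ℕ) (h : i ≤ n) (r : R) (a : ARoot A p e i) :
    aMap A p e R i n h (r ⊗ₜ[A] a) = r ⊗ₜ[A] (ARoot.incl A p e i n h a) := rfl

theorem aux_incl_incl (i j n : ℕ) (hij : i ≤ j) (hjn : j ≤ n) (a : ARoot A p e i) :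
    ARoot.incl A p e j n hjn (ARoot.incl A p e i j hij a)
      = ARoot.incl A p e i n (hij.trans hjn) a := by
  show iterateFrobenius A p (e * (n - j)) (iterateFrobenius A p (e * (j - i)) a)
      = iterateFrobenius A p (e * (n - i)) a
  erw [iterateFrobenius_def, iterateFrobenius_def, iterateFrobenius_def, ← pow_mul,
    ← pow_add, ← Nat.mul_add, show j - i + (n - j) = n - i from by omega]

theorem aux_aMap_aMap (i j n : ℕ) (hij : i ≤ j) (hjn : j ≤ n) (x : BRing A p e R i) :
    aMap A p e R j n hjn (aMap A p e R i j hij x)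
      = aMap A p e R i n (hij.trans hjn) x := by
  induction x using bInd with
  | zero => rw [map_zero, map_zero, map_zero]
  | add x y hx hy => rw [map_add, map_add, hx, hy, map_add]
  | tmul r a =>
    rw [aux_aMap_tmul, aux_aMap_tmul, aux_aMap_tmul, aux_incl_incl]

theorem aux_incl_cast (j n : ℕ) (h : j ≤ n) (a : ARoot A p e j) :
    ARoot.incl A p e (j+1) (n+1) (Nat.succ_le_succ h) (ARoot.cast j (j+1) a)
      = ARoot.cast n (n+1) (ARoot.incl A p e j n h a) := by
  show iterateFrobenius A p (e * (n + 1 - (j + 1))) a = iterateFrobenius A p (e * (n - j)) a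
  have hnj : n + 1 - (j + 1) = n - j := by omega
  rw [hnj]

theorem aux_theta_tmul (n : ℕ) (r : R) (a : ARoot A p e n) :
    theta A p e R n (r ⊗ₜ[A] a) = r ^ p ^ (e * n) * algebraMap A R a := by
  have h : theta A p e R n (r ⊗ₜ[A] a)
      = iterateFrobenius R p (e * n) r * algebraMap A R a := rfl
  rw [h, iterateFrobenius_def]

theorem aux_smul_rootMod (n : ℕ) (M : Type u) [AddCommGroup M] [Module R M]
    (b : BRing A p e R n) (x : RootMod A p e R n M) :
    b • x = theta A p e R n b • (show M from x) := rfl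

theorem aux_of_zero (m : ℕ) (M : Type u) [AddCommGroup M] [Module R M] :
    RootMod.of A p e R m (0 : M) = 0 := rfl

theorem aux_of_add (m : ℕ) {M : Type u} [AddCommGroup M] [Module R M] (x y : M) :
    RootMod.of A p e R m (x + y) = RootMod.of A p e R m x + RootMod.of A p e R m y := rfl

end AuxSetting

section AuxSetting2

variable (A : Type u) [CommRing A] (p : ℕ) [Fact p.Prime] [CharP A p] (e : ℕ)
variable (R : Type u) [CommRing R] [Algebra A R] [CharP R p]

/-- pure tensors in `B_n`, with the correct elaborated type. -/
abbrev bElem (n : ℕ) (r : R) (a : ARoot A p e n) : BRing A p e R n := r ⊗ₜ[A] a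

theorem bElem_mul (n : ℕ) (r s : R) (a b : ARoot A p e n) :
    bElem A p e R n r a * bElem A p e R n s b = bElem A p e R n (r * s) (a * b) := by
  show (r ⊗ₜ[A] a : R ⊗[A] ARoot A p e n) * (s ⊗ₜ[A] b) = (r * s) ⊗ₜ[A] (a * b)
  rw [Algebra.TensorProduct.tmul_mul_tmul]

theorem bInd' {n : ℕ} {motive : BRing A p e R n → Prop} (x : BRing A p e R n)
    (zero : motive 0) (tmul : ∀ (r : R) (a : ARoot A p e n), motive (bElem A p e R n r a))
    (add : ∀ x y, motive x → motive y → motive (x + y)) : motive x :=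
  TensorProduct.induction_on x zero tmul add

theorem algebraMap_eq_bElem (n : ℕ) (r : R) :
    algebraMap R (BRing A p e R n) r = bElem A p e R n r 1 := rfl

theorem bElem_smul_factor (n : ℕ) (r : R) (a : ARoot A p e n) (x : BRing A p e R n) :
    bElem A p e R n r a * x = r • (bElem A p e R n 1 a * x) := by
  rw [Algebra.smul_def, algebraMap_eq_bElem, ← mul_assoc, bElem_mul, mul_one, one_mul]

variable (L : Type u) [AddCommGroup L] [Module R L]
variable (φ : RootMod A p e R 1 L →ₗ[BRing A p e R 1] BRing A p e R 1)
variable (Φt : (n : ℕ) → (L ⊗[R] BRing A p e R n) →+ BRing A p e R (n + 1))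
variable (Φ : (n : ℕ) → (RootMod A p e R n (LObj R L (p ^ e) n)
  →ₗ[BRing A p e R n] BRing A p e R n))

theorem aux_Phit_mul_cast
    (hΦt : ∀ (n : ℕ) (l : L) (r : R) (a : ARoot A p e n),
      Φt n (l ⊗ₜ[R] (r ⊗ₜ[A] a))
        = aMap A p e R 1 (n+1) (Nat.le_add_left 1 n) (φ (RootMod.of A p e R 1 (r • l)))
            * bElem A p e R (n+1) 1 (ARoot.cast n (n+1) a))
    (n : ℕ) (l : L) (a : ARoot A p e n) (c : BRing A p e R n) :
    Φt n (l ⊗ₜ[R] (bElem A p e R n 1 a * c))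
      = bElem A p e R (n+1) 1 (ARoot.cast n (n+1) a) * Φt n (l ⊗ₜ[R] c) := by
  induction c using bInd with
  | zero => rw [mul_zero, TensorProduct.tmul_zero, map_zero, mul_zero]
  | add x y hx hy =>
    rw [mul_add, TensorProduct.tmul_add, map_add, hx, hy, TensorProduct.tmul_add,
      map_add, mul_add]
  | tmul s b =>
    show Φt n (l ⊗ₜ[R] (bElem A p e R n 1 a * bElem A p e R n s b))
      = bElem A p e R (n+1) 1 (ARoot.cast n (n+1) a)
          * Φt n (l ⊗ₜ[R] bElem A p e R n s b)
    rw [bElem_mul, one_mul, hΦt, hΦt, mul_left_comm, bElem_mul, one_mul]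
    rfl

theorem aux_Phit_aMap
    (hΦt : ∀ (n : ℕ) (l : L) (r : R) (a : ARoot A p e n),
      Φt n (l ⊗ₜ[R] (r ⊗ₜ[A] a))
        = aMap A p e R 1 (n+1) (Nat.le_add_left 1 n) (φ (RootMod.of A p e R 1 (r • l)))
            * bElem A p e R (n+1) 1 (ARoot.cast n (n+1) a))
    (j n : ℕ) (h : j ≤ n) (l : L) (x : BRing A p e R j) :
    Φt n (l ⊗ₜ[R] aMap A p e R j n h x)
      = aMap A p e R (j+1) (n+1) (Nat.succ_le_succ h) (Φt j (l ⊗ₜ[R] x)) := by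
  induction x using bInd with
  | zero => rw [map_zero, TensorProduct.tmul_zero, TensorProduct.tmul_zero, map_zero,
      map_zero, map_zero]
  | add x y hx hy =>
    rw [map_add, TensorProduct.tmul_add, map_add, hx, hy, TensorProduct.tmul_add,
      map_add, map_add]
  | tmul r a =>
    rw [aux_aMap_tmul, hΦt, hΦt, map_mul, aux_aMap_aMap]
    congr 1
    show bElem A p e R (n+1) 1 (ARoot.cast n (n+1) (ARoot.incl A p e j n h a))
      = aMap A p e R (j+1) (n+1) (Nat.succ_le_succ h)
          (bElem A p e R (j+1) 1 (ARoot.cast j (j+1) a))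
    rw [aux_aMap_tmul, aux_incl_cast]

theorem aux_phi_zero
    (hΦzero : Φ 0 (RootMod.of A p e R 0 (1 : R)) = 1)
    (x : LObj R L (p ^ e) 0) :
    Φ 0 (RootMod.of A p e R 0 x) = bElem A p e R 0 (show R from x) 1 := by
  have h1 : RootMod.of A p e R 0 x
      = bElem A p e R 0 (show R from x) 1 • (RootMod.of A p e R 0 (1:R)) := by
    erw [aux_smul_rootMod, aux_theta_tmul, map_one, mul_one]
    show (show R from x) = (show R from x) ^ p ^ (e * 0) * (1 : R)
    rw [Nat.mul_zero, pow_zero, pow_one, mul_one]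
  erw [h1, map_smul, hΦzero, smul_eq_mul, mul_one]

theorem aux_phi_succ
    (hΦt : ∀ (n : ℕ) (l : L) (r : R) (a : ARoot A p e n),
      Φt n (l ⊗ₜ[R] (r ⊗ₜ[A] a))
        = aMap A p e R 1 (n+1) (Nat.le_add_left 1 n) (φ (RootMod.of A p e R 1 (r • l)))
            * bElem A p e R (n+1) 1 (ARoot.cast n (n+1) a))
    (hΦsucc : ∀ (n : ℕ) (l : L) (w : LObj R L (p ^ e) n),
      Φ (n+1) (RootMod.of A p e R (n+1)
          ((PiTensorProduct.tprod R fun _ : Fin ((p ^ e) ^ n) => l) ⊗ₜ[R] w))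
        = Φt n (l ⊗ₜ[R] (Φ n (RootMod.of A p e R n w))))
    (j n : ℕ) (h : j ≤ n) (l : L) (w : LObj R L (p ^ e) j) :
    Φt n (l ⊗ₜ[R] aMap A p e R j n h (Φ j (RootMod.of A p e R j w)))
      = aMap A p e R (j+1) (n+1) (Nat.succ_le_succ h)
          (Φ (j+1) (RootMod.of A p e R (j+1)
            ((PiTensorProduct.tprod R fun _ : Fin ((p ^ e) ^ j) => l) ⊗ₜ[R] w))) := by
  rw [aux_Phit_aMap A p e R L φ Φt hΦt, hΦsucc]

end AuxSetting2

theorem aux_tmul_mem_smul_top {R : Type u} [CommRing R]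
    {M N : Type u} [AddCommGroup M] [Module R M] [AddCommGroup N] [Module R N]
    (J : Ideal R) (v : M) {w : N} (hw : w ∈ J • (⊤ : Submodule R N)) :
    v ⊗ₜ[R] w ∈ J • (⊤ : Submodule R (M ⊗[R] N)) := by
  have h1 := Submodule.map_smul'' J (⊤ : Submodule R N) (TensorProduct.mk R M N v)
  have h2 : (TensorProduct.mk R M N v) w
      ∈ Submodule.map (TensorProduct.mk R M N v) (J • ⊤) := Submodule.mem_map_of_mem hw
  rw [h1] at h2
  exact (smul_mono_right J le_top : J • _ ≤ J • (⊤ : Submodule R (M ⊗[R] N))) h2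

/-- In the Setting, for every `n ≥ 0` one has the equality of
ideals of `B_{n+1}`:
`φ̃_{n+1}((L ⊗_R τ_n(X/V, φ I, 𝔞^lam))^{1/q}) + (𝔞^{⌈lam/q⌉} I) B_{n+1}
  = τ_{n+1}(X/V, φ I, 𝔞^{lam/q})`.
(The first summand is the ideal of `B_{n+1}` generated by the image under
`φ̃_{n+1}` of the `q`-th root of `L ⊗_R τ_n`, i.e. by the images of the elements
`l ⊗ c` with `c ∈ τ_n(X/V, φ I, 𝔞^lam)`.) -/
theorem statement3
    (hp : p.Prime) (hI : I ≠ ⊥) (h𝔞 : 𝔞 ≠ ⊥) (hlam : 0 < lam)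
    (hL : ∃ L' : ModuleCat.{u} R, Nonempty ((L ⊗[R] L') ≃ₗ[R] R))
    (hΦt : ∀ (n : ℕ) (l : L) (r : R) (a : ARoot A p e n),
      Φt n (l ⊗ₜ[R] (r ⊗ₜ[A] a))
        = aMap A p e R 1 (n+1) (by omega) (φ (RootMod.of A p e R 1 (r • l)))
            * (show BRing A p e R (n+1) from (1 : R) ⊗ₜ[A] (ARoot.cast n (n+1) a)))
    (hΦzero : Φ 0 (RootMod.of A p e R 0 (1 : R)) = 1)
    (hΦsucc : ∀ (n : ℕ) (l : L) (w : LObj R L (p ^ e) n),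
      Φ (n+1) (RootMod.of A p e R (n+1)
          ((PiTensorProduct.tprod R fun _ : Fin ((p ^ e) ^ n) => l) ⊗ₜ[R] w))
        = Φt n (l ⊗ₜ[R] (Φ n (RootMod.of A p e R n w))))
    (n : ℕ) :
    Ideal.span ((Φt n) '' {x : L ⊗[R] BRing A p e R n |
        ∃ (l : L) (c : BRing A p e R n),
          c ∈ tauRel A p e R L Φ I 𝔞 lam n ∧ x = l ⊗ₜ[R] c})
      + Ideal.map (algebraMap R (BRing A p e R (n+1)))
          (𝔞 ^ ⌈lam / (p : ℝ) ^ e⌉₊ * I)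
      = tauRel A p e R L Φ I 𝔞 (lam / (p : ℝ) ^ e) (n+1) := by
  classical
  have hΦt' : ∀ (m : ℕ) (l : L) (r : R) (a : ARoot A p e m),
      Φt m (l ⊗ₜ[R] (r ⊗ₜ[A] a))
        = aMap A p e R 1 (m+1) (Nat.le_add_left 1 m) (φ (RootMod.of A p e R 1 (r • l)))
            * bElem A p e R (m+1) 1 (ARoot.cast m (m+1) a) := fun m l r a => hΦt m l r a
  have hQ0 : ((p:ℝ) ^ e) ≠ 0 := by
    have hppos : (0:ℝ) < (p:ℝ) := by exact_mod_cast hp.pos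
    positivity
  have hexp : ∀ k : ℕ, ⌈((p:ℝ)^e)^(k+1) * (lam / (p:ℝ)^e)⌉₊ = ⌈((p:ℝ)^e)^k * lam⌉₊ := by
    intro k
    congr 1
    field_simp
    ring
  -- elements of `J • ⊤` in `L⁽⁰⁾ = R`
  have hJ0 : ∀ (J : Ideal R) (x : LObj R L (p^e) 0),
      x ∈ J • (⊤ : Submodule R (LObj R L (p^e) 0)) → (show R from x) ∈ J := by
    intro J x hx
    refine Submodule.smul_induction_on hx ?_ ?_
    · intro r hr u _
      exact Ideal.mul_mem_right _ _ hr
    · intro y z hy hz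
      exact add_mem hy hz
  have hJ0' : ∀ (J : Ideal R) (x : R), x ∈ J →
      (show LObj R L (p^e) 0 from x) ∈ J • (⊤ : Submodule R (LObj R L (p^e) 0)) := by
    intro J x hx
    have h2 : (show LObj R L (p^e) 0 from x)
        = x • (show LObj R L (p^e) 0 from (1:R)) := by
      show x = x * 1
      rw [mul_one]
    rw [h2]
    exact Submodule.smul_mem_smul hx Submodule.mem_top
  -- the image of the `i = 0` piece
  have hzeroelt : ∀ x : LObj R L (p^e) 0,
      aMap A p e R 0 (n+1) (Nat.zero_le _) (Φ 0 (RootMod.of A p e R 0 x))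
        = algebraMap R (BRing A p e R (n+1)) (show R from x) := by
    intro x
    rw [aux_phi_zero A p e R L Φ hΦzero, aux_aMap_tmul, map_one, algebraMap_eq_bElem]
  -- the main forward computation
  have main1 : ∀ c ∈ tauRel A p e R L Φ I 𝔞 lam n, ∀ l : L,
      Φt n (l ⊗ₜ[R] c) ∈ tauRel A p e R L Φ I 𝔞 (lam / (p : ℝ) ^ e) (n+1) := by
    intro c hc
    refine Submodule.iSup_induction
      (motive := fun c => ∀ l : L, Φt n (l ⊗ₜ[R] c)
        ∈ tauRel A p e R L Φ I 𝔞 (lam / (p : ℝ) ^ e) (n+1)) _ hc ?_ ?_ ?_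
    · -- single pieces
      intro i x hx
      induction hx using Submodule.span_induction with
      | mem x hmem =>
        obtain ⟨-, ⟨w, hw, rfl⟩, rfl⟩ := hmem
        intro l
        have hi : (i : ℕ) ≤ n := Nat.lt_succ_iff.mp i.isLt
        rw [aux_phi_succ A p e R L φ Φt Φ hΦt' hΦsucc (i : ℕ) n hi l w]
        refine Submodule.mem_iSup_of_mem (Fin.succ i) ?_
        have hexp' : ⌈((p:ℝ)^e)^((Fin.succ i : Fin (n+2)) : ℕ) * (lam / (p:ℝ)^e)⌉₊
            = ⌈((p:ℝ)^e)^((i : Fin (n+1)) : ℕ) * lam⌉₊ := by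
          rw [show ((Fin.succ i : Fin (n+2)) : ℕ) = (i : ℕ) + 1 from rfl]
          exact hexp (i : ℕ)
        rw [hexp']
        exact Ideal.subset_span
          ⟨_, ⟨(PiTensorProduct.tprod R fun _ : Fin ((p ^ e) ^ (i:ℕ)) => l) ⊗ₜ[R] w,
            aux_tmul_mem_smul_top _ _ hw, rfl⟩, rfl⟩
      | zero =>
        intro l
        rw [TensorProduct.tmul_zero, map_zero]
        exact zero_mem _
      | add x y hx' hy' ihx ihy =>
        intro l
        rw [TensorProduct.tmul_add, map_add]
        exact add_mem (ihx l) (ihy l)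
      | smul b x hx' ih =>
        induction b using bInd' with
        | zero =>
          intro l
          rw [zero_smul, TensorProduct.tmul_zero, map_zero]
          exact zero_mem _
        | add b₁ b₂ h₁ h₂ =>
          intro l
          rw [add_smul, TensorProduct.tmul_add, map_add]
          exact add_mem (h₁ l) (h₂ l)
        | tmul r a =>
          intro l
          rw [smul_eq_mul, bElem_smul_factor A p e R n r a x, ← TensorProduct.smul_tmul,
            aux_Phit_mul_cast A p e R L φ Φt hΦt' n (r • l) a x]
          exact Ideal.mul_mem_left _ _ (ih (r • l))
    · intro l
      rw [TensorProduct.tmul_zero, map_zero]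
      exact zero_mem _
    · intro x y hx hy l
      rw [TensorProduct.tmul_add, map_add]
      exact add_mem (hx l) (hy l)
  rw [Submodule.add_eq_sup]
  apply le_antisymm
  · apply sup_le
    · rw [Ideal.span_le]
      rintro - ⟨x, ⟨l, c, hc, rfl⟩, rfl⟩
      exact main1 c hc l
    · rw [Ideal.map_le_iff_le_comap]
      intro x hx
      show algebraMap R (BRing A p e R (n+1)) x
        ∈ tauRel A p e R L Φ I 𝔞 (lam / (p : ℝ) ^ e) (n+1)
      refine Submodule.mem_iSup_of_mem 0 ?_
      have hexp0 : ⌈((p:ℝ)^e)^(((0 : Fin (n+2))) : ℕ) * (lam / (p:ℝ)^e)⌉₊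
          = ⌈lam / (p:ℝ)^e⌉₊ := by
        rw [show (((0 : Fin (n+2))) : ℕ) = 0 from rfl, pow_zero, one_mul]
      rw [hexp0]
      refine Ideal.subset_span ⟨_, ⟨_, hJ0' _ x hx, rfl⟩, ?_⟩
      exact hzeroelt (show LObj R L (p^e) 0 from x)
  · refine iSup_le ?_
    intro i
    induction i using Fin.cases with
    | zero =>
      rw [Ideal.span_le]
      rintro - ⟨-, ⟨x, hx, rfl⟩, rfl⟩
      have hexp0 : ⌈((p:ℝ)^e)^(((0 : Fin (n+2))) : ℕ) * (lam / (p:ℝ)^e)⌉₊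
          = ⌈lam / (p:ℝ)^e⌉₊ := by
        rw [show (((0 : Fin (n+2))) : ℕ) = 0 from rfl, pow_zero, one_mul]
      rw [hexp0] at hx
      refine Submodule.mem_sup_right ?_
      have hmem := Ideal.mem_map_of_mem (algebraMap R (BRing A p e R (n+1))) (hJ0 _ x hx)
      exact (hzeroelt x).symm ▸ hmem
    | succ j =>
      rw [Ideal.span_le]
      rintro - ⟨-, ⟨w', hw', rfl⟩, rfl⟩
      beta_reduce
      have hjn : (j : ℕ) ≤ n := Nat.lt_succ_iff.mp j.isLt
      have hexp' : ⌈((p:ℝ)^e)^((Fin.succ j : Fin (n+2)) : ℕ) * (lam / (p:ℝ)^e)⌉₊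
          = ⌈((p:ℝ)^e)^((j : Fin (n+1)) : ℕ) * lam⌉₊ := by
        rw [show ((Fin.succ j : Fin (n+2)) : ℕ) = (j : ℕ) + 1 from rfl]
        exact hexp (j : ℕ)
      rw [hexp'] at hw'
      -- step A : the pure diagonal case
      have stepA : ∀ v : TensorPower R ((p^e)^(j:ℕ)) L, ∀ w : LObj R L (p^e) (j:ℕ),
          w ∈ (𝔞 ^ ⌈((p:ℝ)^e)^((j : Fin (n+1)) : ℕ) * lam⌉₊ * I)
              • (⊤ : Submodule R (LObj R L (p^e) (j:ℕ))) →
          aMap A p e R ((j:ℕ)+1) (n+1) (Nat.succ_le_succ hjn)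
              (Φ ((j:ℕ)+1) (RootMod.of A p e R ((j:ℕ)+1) (v ⊗ₜ[R] w)))
            ∈ Ideal.span ((Φt n) '' {x : L ⊗[R] BRing A p e R n |
                ∃ (l : L) (c : BRing A p e R n),
                  c ∈ tauRel A p e R L Φ I 𝔞 lam n ∧ x = l ⊗ₜ[R] c})
              ⊔ Ideal.map (algebraMap R (BRing A p e R (n+1)))
                  (𝔞 ^ ⌈lam / (p : ℝ) ^ e⌉₊ * I) := by
        intro v
        have hv : v ∈ Submodule.span R {z : TensorPower R ((p^e)^(j:ℕ)) L |
            ∃ l : L, z = PiTensorProduct.tprod R (fun _ : Fin ((p^e)^(j:ℕ)) => l)} := by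
          rw [aux_diag_span_eq_top p hL ((p^e)^(j:ℕ)) ⟨e*(j:ℕ), by rw [pow_mul]⟩]
          trivial
        induction hv using Submodule.span_induction with
        | mem v hvd =>
          intro w hw
          obtain ⟨l, rfl⟩ := hvd
          rw [← aux_phi_succ A p e R L φ Φt Φ hΦt' hΦsucc (j:ℕ) n hjn l w]
          apply Submodule.mem_sup_left
          refine Ideal.subset_span
            ⟨l ⊗ₜ[R] (aMap A p e R (j:ℕ) n hjn (Φ (j:ℕ) (RootMod.of A p e R (j:ℕ) w))),
              ⟨l, _, ?_, rfl⟩, rfl⟩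
          exact Submodule.mem_iSup_of_mem j (Ideal.subset_span ⟨_, ⟨w, hw, rfl⟩, rfl⟩)
        | zero =>
          intro w hw
          have h0 : (0 : TensorPower R ((p^e)^(j:ℕ)) L) ⊗ₜ[R] w
              = (0 : LObj R L (p^e) ((j:ℕ)+1)) := TensorProduct.zero_tmul _ w
          rw [h0, aux_of_zero A p e R, map_zero, map_zero]
          exact zero_mem _
        | add v₁ v₂ hv₁ hv₂ ih₁ ih₂ =>
          intro w hw
          erw [TensorProduct.add_tmul, aux_of_add A p e R, map_add, map_add]
          exact add_mem (ih₁ w hw) (ih₂ w hw)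
        | smul r v hv ih =>
          intro w hw
          rw [TensorProduct.smul_tmul]
          exact ih (r • w) (Submodule.smul_mem _ r hw)
      -- step B : reduce a general element of `J • ⊤` to step A
      refine Submodule.smul_induction_on hw' ?_ ?_
      · rintro x hxJ u -
        induction u using TensorProduct.induction_on with
        | zero =>
          beta_reduce
          erw [show x • (0 : TensorPower R ((p^e)^(j:ℕ)) L ⊗[R] LObj R L (p^e) (j:ℕ)) = 0 from
            smul_zero x, aux_of_zero A p e R, map_zero, map_zero]
          exact zero_mem _
        | add u₁ u₂ h₁ h₂ =>
          beta_reduce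
          erw [smul_add, aux_of_add A p e R, map_add, map_add]
          exact add_mem h₁ h₂
        | tmul v w =>
          beta_reduce
          erw [← TensorProduct.tmul_smul]
          exact stepA v (x • w) (Submodule.smul_mem_smul hxJ Submodule.mem_top)
      · intro x y hx hy
        beta_reduce
        rw [aux_of_add A p e R, map_add, map_add]
        exact add_mem hx hy
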